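/- Let Q = (xy − z²)(xy + z²)(x² + y² − 2z²)(x² + y² + 2z²) ∈ ℂ[x,y,z]. Then the set of points of the complex projective plane (nonzero triples (x:y:z) in ℂ³ up to nonzero scalar) at which all three partial derivatives ∂Q/∂x, ∂Q/∂y, ∂Q/∂z vanish has exactly 12 elements. -/

import Mathlib

open MvPolynomial

namespace FourConicAux

open Complex

noncomputable def V : Fin 12 → Fin 3 → ℂ
  | 0 => ![1,0,0]
  | 1 => ![0,1,0]
  | 2 => ![1,I,0]
  | 3 => ![1,-I,0]
  | 4 => ![1,1,1]
  | 5 => ![1,1,-1]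
  | 6 => ![1,-1,1]
  | 7 => ![1,-1,-1]
  | 8 => ![1,1,I]
  | 9 => ![1,1,-I]
  | 10 => ![1,-1,I]
  | 11 => ![1,-1,-I]

lemma V_ne_zero (i : Fin 12) : V i ≠ 0 := by
  fin_cases i <;>
    · intro h
      have h0 := congrFun h 0
      have h1 := congrFun h 1
      revert h0 h1; norm_num [V]

noncomputable def f (i : Fin 12) : Projectivization ℂ (Fin 3 → ℂ) :=
  Projectivization.mk ℂ (V i) (V_ne_zero i)

noncomputable def QP : MvPolynomial (Fin 3) ℂ :=
  (X 0 * X 1 - X 2 ^ 2) * (X 0 * X 1 + X 2 ^ 2) *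
    (X 0 ^ 2 + X 1 ^ 2 - 2 * X 2 ^ 2) * (X 0 ^ 2 + X 1 ^ 2 + 2 * X 2 ^ 2)

def P0 (x y z : ℂ) : ℂ := 6*x^5*y^2 + 8*x^3*y^4 + 2*x*y^6 - 12*x*y^2*z^4 - 4*x^3*z^4
def P1 (x y z : ℂ) : ℂ := 2*x^6*y + 8*x^4*y^3 + 6*x^2*y^5 - 12*x^2*y*z^4 - 4*y^3*z^4
def P2 (x y z : ℂ) : ℂ := -24*x^2*y^2*z^3 - 4*x^4*z^3 - 4*y^4*z^3 + 32*z^7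

lemma pd2 (i : Fin 3) : pderiv i (2 : MvPolynomial (Fin 3) ℂ) = 0 := by
  rw [← map_ofNat (C : ℂ →+* MvPolynomial (Fin 3) ℂ) 2, pderiv_C]

lemma ev0 (v : Fin 3 → ℂ) : eval v (pderiv 0 QP) = P0 (v 0) (v 1) (v 2) := by
  simp [QP, P0, pderiv_mul, pderiv_pow, pderiv_X, pd2]
  ring

lemma ev1 (v : Fin 3 → ℂ) : eval v (pderiv 1 QP) = P1 (v 0) (v 1) (v 2) := by
  simp [QP, P1, pderiv_mul, pderiv_pow, pderiv_X, pd2]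
  ring

lemma ev2 (v : Fin 3 → ℂ) : eval v (pderiv 2 QP) = P2 (v 0) (v 1) (v 2) := by
  simp [QP, P2, pderiv_mul, pderiv_pow, pderiv_X, pd2]
  ring

/-- All twelve base vectors are solutions. -/
lemma sol_V (i : Fin 12) :
    P0 (V i 0) (V i 1) (V i 2) = 0 ∧ P1 (V i 0) (V i 1) (V i 2) = 0 ∧
      P2 (V i 0) (V i 1) (V i 2) = 0 := by
  have h2 : (I:ℂ)^2 = -1 := Complex.I_sq
  have h3 : (I:ℂ)^3 = -I := by rw [pow_succ, h2]; ring
  have h4 : (I:ℂ)^4 = 1 := by rw [pow_succ, h3]; simp [Complex.I_mul_I]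
  have h5 : (I:ℂ)^5 = I := by rw [pow_succ, h4]; ring
  have h6 : (I:ℂ)^6 = -1 := by rw [pow_succ, h5, Complex.I_mul_I]
  have h7 : (I:ℂ)^7 = -I := by rw [pow_succ, h6]; ring
  fin_cases i <;> (norm_num [V, Matrix.cons_val_two, P0, P1, P2, neg_pow, h2, h3, h4, h5, h6, h7]; try ring)

/-- Solutions scale. -/
lemma sol_smul (c x y z : ℂ) (h0 : P0 x y z = 0) (h1 : P1 x y z = 0) (h2 : P2 x y z = 0) :
    P0 (c*x) (c*y) (c*z) = 0 ∧ P1 (c*x) (c*y) (c*z) = 0 ∧ P2 (c*x) (c*y) (c*z) = 0 := by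
  unfold P0 at h0; unfold P1 at h1; unfold P2 at h2; unfold P0 P1 P2
  refine ⟨by linear_combination c^7 * h0, by linear_combination c^7 * h1,
    by linear_combination c^7 * h2⟩

/-- Classification of singular points. -/
lemma classify (x y z : ℂ) (hne : ¬(x = 0 ∧ y = 0 ∧ z = 0))
    (h0 : P0 x y z = 0) (h1 : P1 x y z = 0) (h2 : P2 x y z = 0) :
    ∃ i : Fin 12, ∃ c : ℂ, c ≠ 0 ∧ x = c * V i 0 ∧ y = c * V i 1 ∧ z = c * V i 2 := by
  unfold P0 at h0; unfold P1 at h1; unfold P2 at h2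
  by_cases hz : z = 0
  · subst hz
    have f0 : x * (y^2 * ((x^2+y^2) * (3*x^2+y^2))) = 0 := by linear_combination h0/2
    have f1 : y * (x^2 * ((x^2+y^2) * (x^2+3*y^2))) = 0 := by linear_combination h1/2
    rcases mul_eq_zero.1 f0 with hx0 | f0'
    · -- x = 0
      have hy : y ≠ 0 := fun hy0 => hne ⟨hx0, hy0, rfl⟩
      exact ⟨1, y, hy, by norm_num [V, Matrix.cons_val_two, hx0]⟩
    rcases mul_eq_zero.1 f0' with hy2 | f0''
    · have hy0 : y = 0 := by
        have := pow_eq_zero_iff (n := 2) two_ne_zero |>.1 hy2; exact this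
      have hx : x ≠ 0 := fun hx0 => hne ⟨hx0, hy0, rfl⟩
      exact ⟨0, x, hx, by norm_num [V, Matrix.cons_val_two, hy0]⟩
    rcases mul_eq_zero.1 f0'' with hc | hT
    · -- x² + y² = 0
      have hx : x ≠ 0 := by
        intro hx0
        have : y^2 = 0 := by linear_combination hc - x * hx0
        exact hne ⟨hx0, pow_eq_zero_iff (n := 2) two_ne_zero |>.1 this, rfl⟩
      have hfac : (y - I*x) * (y + I*x) = 0 := by
        linear_combination hc - x^2 * Complex.I_sq
      rcases mul_eq_zero.1 hfac with h | h
      · exact ⟨2, x, hx, by norm_num [V], by norm_num [V]; linear_combination h, by norm_num [V, Matrix.cons_val_two]⟩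
      · exact ⟨3, x, hx, by norm_num [V], by norm_num [V]; linear_combination h, by norm_num [V, Matrix.cons_val_two]⟩
    · -- 3x² + y² = 0 : contradiction
      exfalso
      rcases mul_eq_zero.1 f1 with hy0 | f1'
      · have hx0 : x^2 = 0 := by linear_combination hT/3 - y/3 * hy0
        exact hne ⟨pow_eq_zero_iff (n := 2) two_ne_zero |>.1 hx0, hy0, rfl⟩
      rcases mul_eq_zero.1 f1' with hx2 | f1''
      · have hx0 : x = 0 := pow_eq_zero_iff (n := 2) two_ne_zero |>.1 hx2
        have hy2 : y^2 = 0 := by linear_combination hT - 3*hx2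
        exact hne ⟨hx0, pow_eq_zero_iff (n := 2) two_ne_zero |>.1 hy2, rfl⟩
      rcases mul_eq_zero.1 f1'' with hc | hc
      · have hx2 : x^2 = 0 := by linear_combination hT/2 - hc/2
        have hx0 : x = 0 := pow_eq_zero_iff (n := 2) two_ne_zero |>.1 hx2
        have hy2 : y^2 = 0 := by linear_combination hc - hx2
        exact hne ⟨hx0, pow_eq_zero_iff (n := 2) two_ne_zero |>.1 hy2, rfl⟩
      · have hy2 : y^2 = 0 := by linear_combination 3/8*hc - hT/8
        have hy0 : y = 0 := pow_eq_zero_iff (n := 2) two_ne_zero |>.1 hy2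
        have hx2 : x^2 = 0 := by linear_combination hT/3 - hy2/3
        exact hne ⟨pow_eq_zero_iff (n := 2) two_ne_zero |>.1 hx2, hy0, rfl⟩
  · -- z ≠ 0
    have hz3 : z^3 ≠ 0 := pow_ne_zero _ hz
    have hB : x^4 + y^4 + 6*x^2*y^2 - 8*z^4 = 0 := by
      have h : z^3 * (-4 * (x^4 + y^4 + 6*x^2*y^2 - 8*z^4)) = 0 := by linear_combination h2
      rcases mul_eq_zero.1 h with h | h
      · exact absurd h hz3
      · linear_combination -h/4
    have fx : (x^2*y^2 - z^4) * (x * (x^2 - y^2)) = 0 := by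
      linear_combination h0/4 - (x*y^2/2) * hB
    have fy : (x^2*y^2 - z^4) * (y * (y^2 - x^2)) = 0 := by
      linear_combination h1/4 - (x^2*y/2) * hB
    by_cases hA : x^2*y^2 - z^4 = 0
    · have hsq : (x^2 - y^2)^2 = 0 := by linear_combination hB - 8*hA
      have hxy : x^2 = y^2 := by
        have := pow_eq_zero_iff (n := 2) two_ne_zero |>.1 hsq
        linear_combination this
      have hx : x ≠ 0 := by
        intro hx0
        have hz4 : z^4 = 0 := by linear_combination -hA + (x*y^2) * hx0
        exact hz (pow_eq_zero_iff (n := 4) (by norm_num) |>.1 hz4)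
      have hyfac : (y - x) * (y + x) = 0 := by linear_combination -hxy
      have hzfac : ((z - x) * (z + x)) * ((z - I*x) * (z + I*x)) = 0 := by
        linear_combination -hA - x^2 * hxy + (x^4 - x^2*z^2) * Complex.I_sq
      rcases mul_eq_zero.1 hzfac with hzf | hzf
      · rcases mul_eq_zero.1 hzf with hzx | hzx
        · rcases mul_eq_zero.1 hyfac with hyx | hyx
          · exact ⟨4, x, hx, by norm_num [V], by norm_num [V]; linear_combination hyx, by norm_num [V, Matrix.cons_val_two]; linear_combination hzx⟩
          · exact ⟨6, x, hx, by norm_num [V], by norm_num [V]; linear_combination hyx, by norm_num [V, Matrix.cons_val_two]; linear_combination hzx⟩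
        · rcases mul_eq_zero.1 hyfac with hyx | hyx
          · exact ⟨5, x, hx, by norm_num [V], by norm_num [V]; linear_combination hyx, by norm_num [V, Matrix.cons_val_two]; linear_combination hzx⟩
          · exact ⟨7, x, hx, by norm_num [V], by norm_num [V]; linear_combination hyx, by norm_num [V, Matrix.cons_val_two]; linear_combination hzx⟩
      · rcases mul_eq_zero.1 hzf with hzx | hzx
        · rcases mul_eq_zero.1 hyfac with hyx | hyx
          · exact ⟨8, x, hx, by norm_num [V], by norm_num [V]; linear_combination hyx, by norm_num [V, Matrix.cons_val_two]; linear_combination hzx⟩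
          · exact ⟨10, x, hx, by norm_num [V], by norm_num [V]; linear_combination hyx, by norm_num [V, Matrix.cons_val_two]; linear_combination hzx⟩
        · rcases mul_eq_zero.1 hyfac with hyx | hyx
          · exact ⟨9, x, hx, by norm_num [V], by norm_num [V]; linear_combination hyx, by norm_num [V, Matrix.cons_val_two]; linear_combination hzx⟩
          · exact ⟨11, x, hx, by norm_num [V], by norm_num [V]; linear_combination hyx, by norm_num [V, Matrix.cons_val_two]; linear_combination hzx⟩
    · have hx' : x * (x^2 - y^2) = 0 := (mul_eq_zero.1 fx).resolve_left hA
      have hy' : y * (y^2 - x^2) = 0 := (mul_eq_zero.1 fy).resolve_left hA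
      exfalso
      by_cases hxy : x^2 = y^2
      · exact hA (by linear_combination hB/8 - (x^2-y^2)/8 * hxy)
      · have hx0 : x = 0 := by
          rcases mul_eq_zero.1 hx' with h | h
          · exact h
          · exact absurd (by linear_combination h) hxy
        have hy0 : y = 0 := by
          rcases mul_eq_zero.1 hy' with h | h
          · exact h
          · exact absurd (by linear_combination -h) hxy
        have hz4 : z^4 = 0 := by
          linear_combination -hB/8 + (x^3 + 6*x*y^2)/8 * hx0 + (y^3)/8 * hy0
        exact hz (pow_eq_zero_iff (n := 4) (by norm_num) |>.1 hz4)

lemma cross {v w : Fin 3 → ℂ} (hv : v ≠ 0) (hw : w ≠ 0)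
    (h : Projectivization.mk ℂ v hv = Projectivization.mk ℂ w hw) (k l : Fin 3) :
    v k * w l = v l * w k := by
  obtain ⟨a, ha⟩ := (Projectivization.mk_eq_mk_iff ℂ v w hv hw).1 h
  have hk := congrFun ha k
  have hl := congrFun ha l
  simp only [Pi.smul_apply, Units.smul_def, smul_eq_mul] at hk hl
  rw [← hk, ← hl]; ring

lemma f_injective : Function.Injective f := by
  intro i j h
  have e1 := cross (V_ne_zero i) (V_ne_zero j) h 0 1
  have e2 := cross (V_ne_zero i) (V_ne_zero j) h 0 2
  have e3 := cross (V_ne_zero i) (V_ne_zero j) h 1 2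
  fin_cases i <;> fin_cases j <;>
    first
      | rfl
      | (exfalso; revert e1 e2 e3; norm_num [V, Complex.ext_iff, Matrix.cons_val_two])

end FourConicAux

open FourConicAux in
/-- The arrangement of four conics `xy − z²`, `xy + z²`, `x² + y² − 2z²`, `x² + y² + 2z²`
has exactly 12 singular points in the complex projective plane: the common vanishing locus
of the three partial derivatives of the product `Q` has exactly 12 elements. -/
theorem four_conic_arrangement_twelve_singular_points :
    {p : Projectivization ℂ (Fin 3 → ℂ) |
        ∀ i : Fin 3,
          eval p.rep (pderiv i
            ((X 0 * X 1 - X 2 ^ 2) * (X 0 * X 1 + X 2 ^ 2) *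
              (X 0 ^ 2 + X 1 ^ 2 - 2 * X 2 ^ 2) * (X 0 ^ 2 + X 1 ^ 2 + 2 * X 2 ^ 2) :
              MvPolynomial (Fin 3) ℂ)) = 0}.ncard = 12 := by
  have hset : {p : Projectivization ℂ (Fin 3 → ℂ) |
      ∀ i : Fin 3, eval p.rep (pderiv i QP) = 0} = Set.range f := by
    ext p
    simp only [Set.mem_setOf_eq, Set.mem_range]
    constructor
    · intro hp
      have hne : ¬(p.rep 0 = 0 ∧ p.rep 1 = 0 ∧ p.rep 2 = 0) := by
        rintro ⟨ha, hb, hc⟩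
        apply p.rep_nonzero
        funext k
        fin_cases k <;> assumption
      have h0 := hp 0; have h1 := hp 1; have h2 := hp 2
      rw [ev0] at h0; rw [ev1] at h1; rw [ev2] at h2
      obtain ⟨i, c, hc, hx, hy, hz⟩ := classify _ _ _ hne h0 h1 h2
      refine ⟨i, ?_⟩
      rw [f, ← p.mk_rep]
      symm
      rw [Projectivization.mk_eq_mk_iff' ℂ _ _ p.rep_nonzero (V_ne_zero i)]
      refine ⟨c, ?_⟩
      funext k
      fin_cases k <;> simp only [Pi.smul_apply, smul_eq_mul] <;>
        [exact hx.symm; exact hy.symm; exact hz.symm]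
    · rintro ⟨i, rfl⟩
      obtain ⟨a, ha⟩ := Projectivization.exists_smul_eq_mk_rep ℂ (V i) (V_ne_zero i)
      obtain ⟨s0, s1, s2⟩ := sol_V i
      obtain ⟨t0, t1, t2⟩ := sol_smul (a : ℂ) _ _ _ s0 s1 s2
      have hrep : ∀ k, (f i).rep k = (a : ℂ) * V i k := by
        intro k
        have := congrFun ha k
        simpa [Units.smul_def, f] using this.symm
      intro k
      fin_cases k
      · show eval (f i).rep (pderiv 0 QP) = 0
        rw [ev0, hrep 0, hrep 1, hrep 2]; exact t0
      · show eval (f i).rep (pderiv 1 QP) = 0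
        rw [ev1, hrep 0, hrep 1, hrep 2]; exact t1
      · show eval (f i).rep (pderiv 2 QP) = 0
        rw [ev2, hrep 0, hrep 1, hrep 2]; exact t2
  show {p : Projectivization ℂ (Fin 3 → ℂ) |
      ∀ i : Fin 3, eval p.rep (pderiv i QP) = 0}.ncard = 12
  rw [hset, ← Set.image_univ, Set.ncard_image_of_injective _ f_injective,
    Set.ncard_univ, Nat.card_eq_fintype_card, Fintype.card_fin]
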